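/- Let p be a prime number and let s ∈ ℂ with Re(s) > -1. Then ∫_{ℤ_p^× × ℤ_p^×} |x - y|_p^s dμ(x)dμ(y) = p^{-2}(p - 1)(p - 2) + p^{-2-s}(p - 1)·(1 - p^{-1})/(1 - p^{-1-s}). -/

import Mathlib

open MeasureTheory Complex
open scoped ENNReal

namespace PadicZetaAux

variable {p : ℕ} [hp : Fact p.Prime] [MeasurableSpace ℚ_[p]] [BorelSpace ℚ_[p]]

def B (p : ℕ) [Fact p.Prime] (n : ℕ) : Set ℚ_[p] := {x | ‖x‖ ≤ (p:ℝ) ^ (-(n:ℤ))}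

lemma measurableSet_B (n : ℕ) : MeasurableSet (B p n) :=
  measurableSet_le measurable_norm measurable_const

omit [MeasurableSpace ℚ_[p]] [BorelSpace ℚ_[p]] in
lemma B_zero_eq : B p 0 = {x : ℚ_[p] | ‖x‖ ≤ 1} := by
  simp [B]

omit [MeasurableSpace ℚ_[p]] [BorelSpace ℚ_[p]] in
lemma B_zero_eq_union (n : ℕ) :
    B p 0 = ⋃ a ∈ Finset.range (p ^ n), ((-(a:ℚ_[p])) + ·) ⁻¹' B p n := by
  ext x
  simp only [Set.mem_iUnion, Set.mem_preimage, Finset.mem_range, B, Set.mem_setOf_eq]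
  constructor
  · intro hx
    have hx1 : ‖x‖ ≤ 1 := by simpa using hx
    set ζ : ℤ_[p] := ⟨x, hx1⟩ with hζ
    refine ⟨ζ.appr n, PadicInt.appr_lt ζ n, ?_⟩
    have h1 : ‖ζ - (ζ.appr n : ℤ_[p])‖ ≤ (p:ℝ) ^ (-(n:ℤ)) :=
      (PadicInt.norm_le_pow_iff_mem_span_pow _ n).2 (PadicInt.appr_spec n ζ)
    have h2 : ((ζ - (ζ.appr n : ℤ_[p]) : ℤ_[p]) : ℚ_[p]) = -(ζ.appr n : ℚ_[p]) + x := by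
      have hζx : (ζ : ℚ_[p]) = x := rfl
      rw [PadicInt.coe_sub, hζx]
      push_cast
      ring
    rw [PadicInt.norm_def, h2] at h1
    exact h1
  · rintro ⟨a, ha, hx⟩
    have hpn : ((p:ℝ) ^ (-(n:ℤ))) ≤ 1 := by
      apply zpow_le_one_of_nonpos₀
      · exact_mod_cast hp.1.one_le
      · simp
    have hx' : x = (a:ℚ_[p]) + (-(a:ℚ_[p]) + x) := (add_neg_cancel_left _ _).symm
    rw [hx']
    refine le_trans (Padic.nonarchimedean _ _) (max_le ?_ (le_trans hx hpn))
    have : ((a:ℕ):ℚ_[p]) = ((a:ℤ):ℚ_[p]) := by push_cast; ring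
    rw [this]
    exact Padic.norm_int_le_one (a : ℤ)

omit [MeasurableSpace ℚ_[p]] [BorelSpace ℚ_[p]] in
lemma pairwise_disjoint_cosets (n : ℕ) :
    Set.PairwiseDisjoint (Finset.range (p ^ n) : Set ℕ)
      (fun a => ((-(a:ℚ_[p])) + ·) ⁻¹' B p n) := by
  intro a ha b hb hab
  simp only [Finset.coe_range, Set.mem_Iio] at ha hb
  refine Set.disjoint_left.2 fun x hxa hxb => ?_
  simp only [Set.mem_preimage, B, Set.mem_setOf_eq] at hxa hxb
  have h : ‖((a:ℚ_[p]) - b)‖ ≤ (p:ℝ) ^ (-(n:ℤ)) := by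
    have heq : ((a:ℚ_[p]) - b) = (-(b:ℚ_[p]) + x) + -(-(a:ℚ_[p]) + x) := by ring
    rw [heq]
    refine le_trans (Padic.nonarchimedean _ _) (max_le hxb ?_)
    rwa [norm_neg]
  have h' : ‖((((a:ℤ) - b) : ℤ) : ℚ_[p])‖ ≤ (p:ℝ) ^ (-(n:ℤ)) := by push_cast; exact h
  have hdvd : ((p:ℤ) ^ n) ∣ ((a:ℤ) - b) := by
    have := (Padic.norm_int_le_pow_iff_dvd ((a:ℤ) - b) n).1 h'
    exact_mod_cast this
  have hne : (a:ℤ) - b ≠ 0 := sub_ne_zero.2 (by exact_mod_cast hab)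
  have hle : (p:ℤ) ^ n ≤ |(a:ℤ) - b| := Int.le_of_dvd (abs_pos.2 hne) ((dvd_abs _ _).2 hdvd)
  have ha' : (a:ℤ) < (p:ℤ) ^ n := by exact_mod_cast ha
  have hb' : (b:ℤ) < (p:ℤ) ^ n := by exact_mod_cast hb
  have habs : |(a:ℤ) - b| < (p:ℤ) ^ n := by
    rw [abs_sub_lt_iff]; omega
  omega

variable (μ : Measure ℚ_[p]) [μ.IsAddHaarMeasure]

lemma measure_B (hμ : μ {x : ℚ_[p] | ‖x‖ ≤ 1} = 1) (n : ℕ) :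
    μ (B p n) = ((p : ℝ≥0∞) ^ n)⁻¹ := by
  have key : (1 : ℝ≥0∞) = (p ^ n : ℕ) * μ (B p n) := by
    rw [← hμ, ← B_zero_eq, B_zero_eq_union n, measure_biUnion_finset (pairwise_disjoint_cosets n)
      (fun a _ => (measurableSet_B n).preimage (measurable_const_add _))]
    simp [measure_preimage_add, Finset.sum_const]
  have hc : (p:ℝ≥0∞) ^ n * μ (B p n) = 1 := by
    rw [← Nat.cast_pow]; exact key.symm
  have hp0 : ((p:ℝ≥0∞) ^ n) ≠ 0 :=
    pow_ne_zero _ (by exact_mod_cast hp.1.ne_zero)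
  have hptop : ((p:ℝ≥0∞) ^ n) ≠ ⊤ :=
    ENNReal.pow_ne_top (ENNReal.natCast_ne_top p)
  calc μ (B p n) = ((p:ℝ≥0∞) ^ n)⁻¹ * ((p:ℝ≥0∞) ^ n * μ (B p n)) := by
        rw [← mul_assoc, ENNReal.inv_mul_cancel hp0 hptop, one_mul]
    _ = ((p:ℝ≥0∞) ^ n)⁻¹ := by rw [hc, mul_one]

end PadicZetaAux

namespace Stage2
open PadicZetaAux

variable {p : ℕ} [hp : Fact p.Prime] [MeasurableSpace ℚ_[p]] [BorelSpace ℚ_[p]]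

/-- the sphere of radius `p^{-n}`. -/
def C (p : ℕ) [Fact p.Prime] (n : ℕ) : Set ℚ_[p] := {x | ‖x‖ = (p:ℝ) ^ (-(n:ℤ))}

lemma measurableSet_C (n : ℕ) : MeasurableSet (C p n) :=
  measurable_norm (measurableSet_singleton ((p:ℝ) ^ (-(n:ℤ))))

omit [MeasurableSpace ℚ_[p]] [BorelSpace ℚ_[p]] in
lemma one_lt_p : (1:ℝ) < p := by exact_mod_cast hp.1.one_lt

omit [MeasurableSpace ℚ_[p]] [BorelSpace ℚ_[p]] in
lemma C_eq_diff (n : ℕ) : C p n = B p n \ B p (n + 1) := by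
  ext x
  simp only [C, B, Set.mem_setOf_eq, Set.mem_diff]
  constructor
  · intro h
    refine ⟨le_of_eq h, fun hle => ?_⟩
    have : (p:ℝ) ^ (-((n:ℤ)+1)) < (p:ℝ) ^ (-(n:ℤ)) :=
      zpow_lt_zpow_right₀ one_lt_p (by omega)
    rw [h] at hle
    push_cast at hle
    linarith
  · rintro ⟨h1, h2⟩
    have hiff := Padic.norm_le_pow_iff_norm_lt_pow_add_one x (-(n:ℤ) - 1)
    have : ¬ ‖x‖ < (p:ℝ) ^ (-(n:ℤ) - 1 + 1) := by
      intro hlt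
      apply h2
      have := hiff.2 hlt
      push_cast
      convert this using 2
      ring
    rw [show (-(n:ℤ) - 1 + 1) = -(n:ℤ) by ring] at this
    exact le_antisymm h1 (not_lt.1 this)

variable (μ : Measure ℚ_[p]) [μ.IsAddHaarMeasure]

lemma measure_C (hμ : μ {x : ℚ_[p] | ‖x‖ ≤ 1} = 1) (n : ℕ) :
    μ (C p n) = ((p : ℝ≥0∞) ^ n)⁻¹ - ((p : ℝ≥0∞) ^ (n+1))⁻¹ := by
  rw [C_eq_diff, measure_diff ?_ (measurableSet_B (n+1)).nullMeasurableSet ?_,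
    measure_B μ hμ, measure_B μ hμ]
  · intro x hx
    simp only [B, Set.mem_setOf_eq] at hx ⊢
    exact hx.trans (zpow_le_zpow_right₀ (le_of_lt one_lt_p) (by omega))
  · rw [measure_B μ hμ]
    exact ENNReal.inv_ne_top.2 (pow_ne_zero _ (by exact_mod_cast hp.1.ne_zero))

/-- negation-translation invariance of the measure of slices. -/
lemma measure_sub_preimage (x : ℚ_[p]) (s : Set ℚ_[p]) :
    μ ((fun y => x - y) ⁻¹' s) = μ s := by
  have : (fun y : ℚ_[p] => x - y) = (fun y => x + y) ∘ (fun y => -y) := by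
    funext y; simp [sub_eq_add_neg]
  rw [this, Set.preimage_comp]
  rw [show ((fun y : ℚ_[p] => -y) ⁻¹' ((fun y => x + y) ⁻¹' s)) = -((fun y => x + y) ⁻¹' s) by rfl]
  rw [Measure.measure_neg, measure_preimage_add]



/-- The subset of `U × U` where `‖x - y‖ = p^{-n}`. -/
def T (p : ℕ) [Fact p.Prime] (n : ℕ) : Set (ℚ_[p] × ℚ_[p]) :=
  (C p 0 ×ˢ C p 0) ∩ {z | ‖z.1 - z.2‖ = (p:ℝ) ^ (-(n:ℤ))}

lemma measurableSet_T (n : ℕ) : MeasurableSet (T p n) :=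
  ((measurableSet_C 0).prod (measurableSet_C 0)).inter
    (((measurable_fst.sub measurable_snd).norm) (measurableSet_singleton _))

omit [MeasurableSpace ℚ_[p]] [BorelSpace ℚ_[p]] in
/-- key ultrametric fact: if `x` is a unit and `‖x - y‖ < 1` then `y` is a unit. -/
lemma unit_of_close {x y : ℚ_[p]} (hx : ‖x‖ = 1) (hxy : ‖x - y‖ < 1) : ‖y‖ = 1 := by
  have h : y = x + -(x - y) := by ring
  have hne : ‖x‖ ≠ ‖-(x - y)‖ := by
    rw [norm_neg, hx]
    exact fun he => absurd he.symm (ne_of_lt hxy)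
  rw [h, Padic.add_eq_max_of_ne hne, norm_neg, hx]
  exact max_eq_left hxy.le

omit [MeasurableSpace ℚ_[p]] [BorelSpace ℚ_[p]] in
lemma slice_T_pos {n : ℕ} (hn : 1 ≤ n) {x : ℚ_[p]} (hx : x ∈ C p 0) :
    Prod.mk x ⁻¹' T p n = (fun y => x - y) ⁻¹' C p n := by
  have hlt : (p:ℝ) ^ (-(n:ℤ)) < 1 := by
    apply zpow_lt_one_of_neg₀ one_lt_p (by omega)
  ext y
  simp only [T, C, Set.mem_preimage, Set.mem_inter_iff, Set.mem_prod, Set.mem_setOf_eq] at *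
  constructor
  · rintro ⟨-, h⟩; exact h
  · intro h
    have hx1 : ‖x‖ = 1 := by simpa using hx
    have hy : ‖y‖ = 1 := unit_of_close hx1 (h ▸ hlt)
    refine ⟨⟨by simpa using hx1, by simpa using hy⟩, h⟩

omit [MeasurableSpace ℚ_[p]] [BorelSpace ℚ_[p]] in
lemma slice_T_zero {x : ℚ_[p]} (hx : x ∈ C p 0) :
    Prod.mk x ⁻¹' T p 0 = C p 0 \ ((fun y => x - y) ⁻¹' B p 1) := by
  have hplt : ((p:ℝ) ^ (-(1:ℤ))) < 1 := zpow_lt_one_of_neg₀ one_lt_p (by omega)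
  ext y
  simp only [T, C, B, Set.mem_preimage, Set.mem_inter_iff, Set.mem_prod, Set.mem_setOf_eq,
    Set.mem_diff, Nat.cast_zero, neg_zero, zpow_zero] at *
  constructor
  · rintro ⟨⟨-, hy⟩, h⟩
    refine ⟨hy, fun hle => ?_⟩
    rw [h] at hle
    push_cast at hle
    linarith
  · rintro ⟨hy, hnle⟩
    have hle1 : ‖x - y‖ ≤ 1 := by
      rw [sub_eq_add_neg]
      refine le_trans (Padic.nonarchimedean _ _) (max_le (le_of_eq hx) ?_)
      rw [norm_neg]; exact le_of_eq hy
    have hone : ‖x - y‖ = 1 := by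
      rcases lt_or_eq_of_le hle1 with hlt | he
      · exfalso
        apply hnle
        have := (Padic.norm_le_pow_iff_norm_lt_pow_add_one (x - y) (-1)).2 (by simpa using hlt)
        exact this
      · exact he
    exact ⟨⟨hx, hy⟩, hone⟩

omit [MeasurableSpace ℚ_[p]] [BorelSpace ℚ_[p]] in
lemma slice_T_empty {n : ℕ} {x : ℚ_[p]} (hx : x ∉ C p 0) :
    Prod.mk x ⁻¹' T p n = ∅ := by
  ext y
  simp only [T, Set.mem_preimage, Set.mem_inter_iff, Set.mem_prod, Set.mem_empty_iff_false,
    iff_false]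
  rintro ⟨⟨h1, -⟩, -⟩
  exact hx h1

lemma measure_T_pos (hμ : μ {x : ℚ_[p] | ‖x‖ ≤ 1} = 1) {n : ℕ} (hn : 1 ≤ n) :
    (μ.prod μ) (T p n) = μ (C p 0) * μ (C p n) := by
  rw [Measure.prod_apply (measurableSet_T n)]
  have : ∀ x, μ (Prod.mk x ⁻¹' T p n) = Set.indicator (C p 0) (fun _ => μ (C p n)) x := by
    intro x
    by_cases hx : x ∈ C p 0
    · rw [slice_T_pos hn hx, measure_sub_preimage, Set.indicator_of_mem hx]
    · rw [slice_T_empty hx, Set.indicator_of_notMem hx, measure_empty]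
  simp_rw [this]
  rw [lintegral_indicator_const (measurableSet_C 0)]
  ring

lemma measure_T_zero (hμ : μ {x : ℚ_[p] | ‖x‖ ≤ 1} = 1) :
    (μ.prod μ) (T p 0) = μ (C p 0) * (μ (C p 0) - μ (B p 1)) := by
  rw [Measure.prod_apply (measurableSet_T 0)]
  have hsub : ∀ x : ℚ_[p], x ∈ C p 0 → ((fun y => x - y) ⁻¹' B p 1) ⊆ C p 0 := by
    intro x hx y hy
    simp only [B, Set.mem_preimage, Set.mem_setOf_eq] at hy
    have hx1 : ‖x‖ = 1 := by simpa [C] using hx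
    have : ‖x - y‖ < 1 := lt_of_le_of_lt hy (zpow_lt_one_of_neg₀ one_lt_p (by omega))
    simpa [C] using unit_of_close hx1 this
  have : ∀ x, μ (Prod.mk x ⁻¹' T p 0)
      = Set.indicator (C p 0) (fun _ => μ (C p 0) - μ (B p 1)) x := by
    intro x
    by_cases hx : x ∈ C p 0
    · rw [slice_T_zero hx, Set.indicator_of_mem hx,
        measure_diff (hsub x hx) ((measurableSet_B 1).preimage (by fun_prop)).nullMeasurableSet
          ?_, measure_sub_preimage]
      rw [measure_sub_preimage, measure_B μ hμ]
      exact ENNReal.inv_ne_top.2 (pow_ne_zero _ (by exact_mod_cast hp.1.ne_zero))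
    · rw [slice_T_empty hx, Set.indicator_of_notMem hx, measure_empty]
  simp_rw [this]
  rw [lintegral_indicator_const (measurableSet_C 0)]
  ring



omit [MeasurableSpace ℚ_[p]] [BorelSpace ℚ_[p]] in
lemma T_disjoint : Pairwise (Function.onFun Disjoint (T p)) := by
  intro m n hmn
  refine Set.disjoint_left.2 fun z hzm hzn => ?_
  simp only [T, Set.mem_inter_iff, Set.mem_setOf_eq] at hzm hzn
  have h := hzm.2.symm.trans hzn.2
  have : (-(m:ℤ)) = (-(n:ℤ)) := by
    rcases lt_trichotomy (m:ℤ) (n:ℤ) with hlt | he | hlt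
    · exact absurd h (ne_of_gt (zpow_lt_zpow_right₀ one_lt_p (by omega)))
    · omega
    · exact absurd h (ne_of_lt (zpow_lt_zpow_right₀ one_lt_p (by omega)))
  exact hmn (by omega)

omit [MeasurableSpace ℚ_[p]] [BorelSpace ℚ_[p]] in
lemma iUnion_T :
    (⋃ n, T p n) = (C p 0 ×ˢ C p 0) ∩ {z : ℚ_[p] × ℚ_[p] | z.1 ≠ z.2} := by
  ext z
  simp only [Set.mem_iUnion, T, Set.mem_inter_iff, Set.mem_setOf_eq]
  constructor
  · rintro ⟨n, hz, h⟩
    refine ⟨hz, fun he => ?_⟩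
    rw [he, sub_self, norm_zero] at h
    have hpos : (0:ℝ) < (p:ℝ) ^ (-(n:ℤ)) := zpow_pos (by exact_mod_cast hp.1.pos) _
    rw [← h] at hpos
    exact lt_irrefl _ hpos
  · rintro ⟨hz, hne⟩
    have hz1 : ‖z.1‖ = 1 := by
      have := hz.1; simpa [C] using this
    have hz2 : ‖z.2‖ = 1 := by
      have := hz.2; simpa [C] using this
    have hd : z.1 - z.2 ≠ 0 := sub_ne_zero.2 hne
    have hnorm := Padic.norm_eq_zpow_neg_valuation hd
    have hle : ‖z.1 - z.2‖ ≤ 1 := by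
      rw [sub_eq_add_neg]
      refine le_trans (Padic.nonarchimedean _ _) (max_le (le_of_eq hz1) ?_)
      rw [norm_neg]; exact le_of_eq hz2
    have hv : 0 ≤ (z.1 - z.2).valuation := by
      by_contra hneg
      push_neg at hneg
      have h1 : (1:ℝ) < (p:ℝ) ^ (-(z.1 - z.2).valuation) :=
        one_lt_zpow₀ one_lt_p (by omega)
      rw [← hnorm] at h1
      linarith
    refine ⟨(z.1 - z.2).valuation.toNat, hz, ?_⟩
    rw [hnorm]
    congr 1
    omega

lemma diag_null (μ : Measure ℚ_[p]) [μ.IsAddHaarMeasure] :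
    (μ.prod μ) {z : ℚ_[p] × ℚ_[p] | z.1 = z.2} = 0 := by
  have hm : MeasurableSet {z : ℚ_[p] × ℚ_[p] | z.1 = z.2} := by
    have h : {z : ℚ_[p] × ℚ_[p] | z.1 = z.2}
        = (fun z : ℚ_[p] × ℚ_[p] => z.1 - z.2) ⁻¹' {0} := by
      ext z; simp [sub_eq_zero]
    rw [h]
    exact (measurable_fst.sub measurable_snd) (measurableSet_singleton 0)
  rw [Measure.prod_apply hm]
  have h0 : ∀ x : ℚ_[p], μ (Prod.mk x ⁻¹' {z : ℚ_[p] × ℚ_[p] | z.1 = z.2}) = 0 := by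
    intro x
    have h : Prod.mk x ⁻¹' {z : ℚ_[p] × ℚ_[p] | z.1 = z.2} = {x} := by
      ext y; simp [eq_comm]
    rw [h]
    exact measure_singleton x
  simp [h0]

omit [MeasurableSpace ℚ_[p]] [BorelSpace ℚ_[p]] in
lemma aux_pow (s : ℂ) (m : ℕ) :
    (((p:ℝ)⁻¹ ^ m : ℝ) : ℂ) * ((((p:ℝ) ^ (-(m:ℤ)) : ℝ)) : ℂ) ^ s
      = ((p:ℂ) ^ (-1 - s)) ^ m := by
  have hpc : ((p:ℂ)) ≠ 0 := by exact_mod_cast hp.1.ne_zero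
  have harg : Complex.arg ((p:ℕ):ℂ) = 0 := Complex.natCast_arg
  have hlt : -Real.pi < ((-(m:ℤ) : ℤ) : ℝ) * Complex.arg ((p:ℕ):ℂ) := by
    rw [harg]; simpa using Real.pi_pos
  have hle' : ((-(m:ℤ) : ℤ) : ℝ) * Complex.arg ((p:ℕ):ℂ) ≤ Real.pi := by
    rw [harg]; simpa using Real.pi_nonneg
  have h3 := Complex.cpow_int_mul' (x := (p:ℂ)) (n := -(m:ℤ)) hlt hle' s
  have h4 : ((p:ℂ) ^ (-1 - s)) ^ m = (p:ℂ) ^ ((((m:ℤ)):ℂ) * (-1 - s)) := by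
    rw [Complex.cpow_int_mul ((p:ℂ)) (m:ℤ) (-1 - s), zpow_natCast]
  have h1 : (((p:ℝ)⁻¹ ^ m : ℝ) : ℂ) = (p:ℂ) ^ (-(m:ℤ)) := by
    push_cast
    rw [zpow_neg, zpow_natCast, inv_pow]
  have h2 : ((((p:ℝ) ^ (-(m:ℤ)) : ℝ)) : ℂ) = (p:ℂ) ^ (-(m:ℤ)) := by
    push_cast; ring
  rw [h1, h2, ← h3, h4, ← Complex.cpow_intCast (p:ℂ) (-(m:ℤ)), ← Complex.cpow_add _ _ hpc]
  congr 1
  push_cast; ring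

end Stage2

open PadicZetaAux Stage2 in
/-- Example-4: the integral of `|x-y|_p^s` over `ℤ_p^× × ℤ_p^×`. -/
theorem padic_zeta_integral_diff_units (p : ℕ) [Fact p.Prime]
    [MeasurableSpace ℚ_[p]] [BorelSpace ℚ_[p]]
    (μ : Measure ℚ_[p]) [μ.IsAddHaarMeasure]
    (hμ : μ {x : ℚ_[p] | ‖x‖ ≤ 1} = 1)
    (s : ℂ) (hs : -1 < s.re) :
    ∫ z in ({x : ℚ_[p] | ‖x‖ = 1} ×ˢ {x : ℚ_[p] | ‖x‖ = 1}),
        (‖z.1 - z.2‖ : ℂ) ^ s ∂(μ.prod μ)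
      = (p : ℂ) ^ (-2 : ℂ) * ((p : ℂ) - 1) * ((p : ℂ) - 2)
        + (p : ℂ) ^ (-2 - s) * ((p : ℂ) - 1) *
            ((1 - (p : ℂ)⁻¹) / (1 - (p : ℂ) ^ (-1 - s))) := by
  classical
  have hp := (Fact.out : p.Prime)
  have hpR : (0:ℝ) < p := by exact_mod_cast hp.pos
  have h1pR : (1:ℝ) < p := by exact_mod_cast hp.one_lt
  have hpc : ((p:ℂ)) ≠ 0 := by exact_mod_cast hp.ne_zero
  set aR : ℝ := (p:ℝ)⁻¹ with haR
  set w : ℂ := (p:ℂ) ^ (-1 - s) with hwdef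
  set f : ℚ_[p] × ℚ_[p] → ℂ := fun z => (‖z.1 - z.2‖ : ℂ) ^ s with hf
  set ν : Measure (ℚ_[p] × ℚ_[p]) := μ.prod μ with hν
  -- basic norm facts about w
  have hw : ‖w‖ < 1 := by
    rw [hwdef, show ((p:ℕ):ℂ) = (((p:ℝ)):ℂ) by push_cast; rfl,
      Complex.norm_cpow_eq_rpow_re_of_pos hpR]
    apply Real.rpow_lt_one_of_one_lt_of_neg h1pR
    simp only [Complex.sub_re, Complex.neg_re, Complex.one_re]
    linarith
  have hw1 : (1:ℂ) - w ≠ 0 := by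
    intro h
    have : w = 1 := by linear_combination -h
    rw [this] at hw
    simp at hw
  -- step A: replace the domain by the disjoint union of the `T n`
  have hUC : ({x : ℚ_[p] | ‖x‖ = 1} : Set ℚ_[p]) = C p 0 := by
    ext x; simp [C]
  have hae : ((C p 0 ×ˢ C p 0) : Set (ℚ_[p] × ℚ_[p])) =ᵐ[ν] ⋃ n, T p n := by
    have hdiag := diag_null (p := p) μ
    rw [Filter.eventuallyEq_set]
    have hane : ∀ᵐ z ∂ν, z.1 ≠ z.2 := by
      rw [MeasureTheory.ae_iff]
      simpa using hdiag
    filter_upwards [hane] with z hz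
    rw [iUnion_T]
    simp [hz]
  have hstep : ∫ z in (C p 0 ×ˢ C p 0), f z ∂ν = ∫ z in ⋃ n, T p n, f z ∂ν :=
    setIntegral_congr_set hae
  -- measurability of the integrand
  have hfm : Measurable f := by
    have h1 : Measurable fun x : ℂ => x ^ s := by
      rw [show (fun x : ℂ => x ^ s) = fun x =>
          if x = 0 then (if s = 0 then 1 else 0) else Complex.exp (Complex.log x * s) from
        funext fun x => by rw [Complex.cpow_def]]
      exact Measurable.ite (measurableSet_eq) measurable_const
        ((Complex.measurable_log.mul_const s).cexp)
    exact h1.comp (Complex.measurable_ofReal.comp ((measurable_fst.sub measurable_snd).norm))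
  -- the integrand is constant on each `T n`
  have hfT : ∀ n : ℕ, ∀ z ∈ T p n, f z = (((p:ℝ) ^ (-(n:ℤ)) : ℝ) : ℂ) ^ s := by
    intro n z hz
    simp only [T, Set.mem_inter_iff, Set.mem_setOf_eq] at hz
    rw [hf]
    simp only
    rw [hz.2]
  have hmeasT : ∀ n : ℕ, MeasurableSet (T p n) := fun n => measurableSet_T n
  -- measure bounds
  have hC0le : μ (C p 0) ≤ 1 := by
    rw [C_eq_diff]
    refine le_trans (measure_mono Set.diff_subset) ?_
    rw [measure_B μ hμ 0]
    simp
  have hTle : ∀ n : ℕ, ν (T p n) ≤ ((p:ℝ≥0∞) ^ n)⁻¹ := by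
    intro n
    match n with
    | 0 =>
      rw [measure_T_zero μ hμ]
      simpa using mul_le_mul' hC0le (le_trans tsub_le_self hC0le)
    | Nat.succ m =>
      rw [measure_T_pos μ hμ (Nat.succ_le_succ (Nat.zero_le m))]
      have hCn : μ (C p (m+1)) ≤ ((p:ℝ≥0∞) ^ (m+1))⁻¹ := by
        rw [C_eq_diff]
        exact le_trans (measure_mono Set.diff_subset) (le_of_eq (measure_B μ hμ (m+1)))
      simpa using mul_le_mul' hC0le hCn
  -- integrability on the union
  set r0 : ℝ := (p:ℝ) ^ (-(1 + s.re)) with hr0def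
  have hr0nn : 0 ≤ r0 := Real.rpow_nonneg hpR.le _
  have hr0lt : r0 < 1 := Real.rpow_lt_one_of_one_lt_of_neg h1pR (by linarith)
  have hrealgeo : ∀ n : ℕ, ((p:ℝ) ^ (-(n:ℤ))) ^ s.re * ((p:ℝ)⁻¹) ^ n = r0 ^ n := by
    intro n
    have e1 : ((p:ℝ) ^ (-(n:ℤ))) = (p:ℝ) ^ (-(n:ℝ)) := by
      rw [← Real.rpow_intCast]
      norm_num
    have e2 : ((p:ℝ)⁻¹) ^ n = (p:ℝ) ^ ((-1 : ℝ) * n) := by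
      rw [← Real.rpow_neg_one, ← Real.rpow_natCast ((p:ℝ) ^ (-1:ℝ)) n, ← Real.rpow_mul hpR.le]
    have e3 : r0 ^ n = (p:ℝ) ^ ((-(1 + s.re)) * n) := by
      rw [hr0def, ← Real.rpow_natCast ((p:ℝ) ^ (-(1 + s.re))) n, ← Real.rpow_mul hpR.le]
    rw [e1, e2, e3, ← Real.rpow_mul hpR.le, ← Real.rpow_add hpR]
    congr 1
    push_cast
    ring
  have hnorm_on : ∀ n : ℕ, ∀ z ∈ T p n,
      ((‖f z‖₊ : ℝ≥0∞)) = ENNReal.ofReal (((p:ℝ) ^ (-(n:ℤ))) ^ s.re) := by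
    intro n z hz
    rw [← enorm_eq_nnnorm, ← ofReal_norm, hfT n z hz]
    congr 1
    rw [Complex.norm_cpow_eq_rpow_re_of_pos (zpow_pos hpR _)]
  have hint : IntegrableOn f (⋃ n, T p n) ν := by
    refine ⟨hfm.aestronglyMeasurable, ?_⟩
    rw [MeasureTheory.hasFiniteIntegral_def]
    calc ∫⁻ z in ⋃ n, T p n, (‖f z‖₊ : ℝ≥0∞) ∂ν
        = ∑' n, ∫⁻ z in T p n, (‖f z‖₊ : ℝ≥0∞) ∂ν :=
          lintegral_iUnion hmeasT T_disjoint _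
      _ = ∑' n : ℕ, ENNReal.ofReal (((p:ℝ) ^ (-(n:ℤ))) ^ s.re) * ν (T p n) := by
          refine tsum_congr fun n => ?_
          rw [setLIntegral_congr_fun (hmeasT n) (fun z hz => hnorm_on n z hz),
            setLIntegral_const]
      _ ≤ ∑' n : ℕ, ENNReal.ofReal (((p:ℝ) ^ (-(n:ℤ))) ^ s.re) * ((p:ℝ≥0∞) ^ n)⁻¹ :=
          ENNReal.tsum_le_tsum fun n => mul_le_mul_right (hTle n) _
      _ = ∑' n : ℕ, (ENNReal.ofReal r0) ^ n := by
          refine tsum_congr fun n => ?_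
          have hppow : ((p:ℝ≥0∞) ^ n)⁻¹ = ENNReal.ofReal (((p:ℝ)⁻¹) ^ n) := by
            rw [ENNReal.ofReal_pow (by positivity), ENNReal.ofReal_inv_of_pos hpR,
              ENNReal.ofReal_natCast, ENNReal.inv_pow]
          rw [hppow, ← ENNReal.ofReal_mul (by positivity), hrealgeo n,
            ENNReal.ofReal_pow hr0nn]
      _ = (1 - ENNReal.ofReal r0)⁻¹ := ENNReal.tsum_geometric _
      _ < ⊤ := by
          rw [ENNReal.inv_lt_top, tsub_pos_iff_lt]
          exact ENNReal.ofReal_lt_one.2 hr0lt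
  -- sum of integrals
  have hsum := MeasureTheory.hasSum_integral_iUnion hmeasT T_disjoint hint
  have hIn : ∀ n : ℕ, ∫ z in T p n, f z ∂ν
      = (ν (T p n)).toReal • ((((p:ℝ) ^ (-(n:ℤ)) : ℝ)) : ℂ) ^ s := by
    intro n
    rw [setIntegral_congr_fun (hmeasT n) (fun z hz => hfT n z hz), setIntegral_const]
    rfl
  -- numeric values of the measures
  have hpe0 : ((p:ℝ≥0∞)) ≠ 0 := by exact_mod_cast hp.ne_zero
  have hinvle1 : (p:ℝ≥0∞)⁻¹ ≤ 1 := ENNReal.inv_le_one.2 (by exact_mod_cast hp.one_le)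
  have h2p : (p:ℝ≥0∞)⁻¹ + (p:ℝ≥0∞)⁻¹ ≤ 1 := by
    have h2 : (p:ℝ≥0∞)⁻¹ ≤ (2:ℝ≥0∞)⁻¹ :=
      ENNReal.inv_le_inv' (by exact_mod_cast hp.two_le)
    calc (p:ℝ≥0∞)⁻¹ + (p:ℝ≥0∞)⁻¹ ≤ (2:ℝ≥0∞)⁻¹ + (2:ℝ≥0∞)⁻¹ := add_le_add h2 h2
      _ = 1 := by rw [← two_mul, ENNReal.mul_inv_cancel two_ne_zero ENNReal.ofNat_ne_top]
  have hinvle : (p:ℝ≥0∞)⁻¹ ≤ 1 - (p:ℝ≥0∞)⁻¹ := ENNReal.le_sub_of_add_le_right (ENNReal.inv_ne_top.2 (by exact_mod_cast hp.ne_zero)) h2p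
  have hμC0 : μ (C p 0) = 1 - (p:ℝ≥0∞)⁻¹ := by
    rw [measure_C μ hμ 0]
    norm_num
  have hμB1 : μ (B p 1) = (p:ℝ≥0∞)⁻¹ := by
    rw [measure_B μ hμ 1, pow_one]
  have hC0top : μ (C p 0) ≠ ⊤ := by
    rw [hμC0]
    exact ne_top_of_le_ne_top ENNReal.one_ne_top tsub_le_self
  have hinvR : ((p:ℝ≥0∞)⁻¹).toReal = aR := by
    rw [ENNReal.toReal_inv]
    simp [haR]
  have htC0 : (μ (C p 0)).toReal = 1 - aR := by
    rw [hμC0, ENNReal.toReal_sub_of_le hinvle1 ENNReal.one_ne_top, hinvR, ENNReal.toReal_one]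
  have htCn : ∀ n : ℕ, (μ (C p n)).toReal = aR ^ n * (1 - aR) := by
    intro n
    have hle : ((p:ℝ≥0∞) ^ (n+1))⁻¹ ≤ ((p:ℝ≥0∞) ^ n)⁻¹ :=
      ENNReal.inv_le_inv' (pow_le_pow_right' (by exact_mod_cast hp.one_le) (Nat.le_succ n))
    rw [measure_C μ hμ n,
      ENNReal.toReal_sub_of_le hle (ENNReal.inv_ne_top.2 (pow_ne_zero _ hpe0)),
      ENNReal.toReal_inv, ENNReal.toReal_inv, ENNReal.toReal_pow, ENNReal.toReal_pow,
      ENNReal.toReal_natCast, haR, ← inv_pow, ← inv_pow]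
    ring
  have htB1 : (μ (B p 1)).toReal = aR := by rw [hμB1, hinvR]
  have hBle : μ (B p 1) ≤ μ (C p 0) := by rw [hμB1, hμC0]; exact hinvle
  have hνT0 : (ν (T p 0)).toReal = (1 - aR) * (1 - 2*aR) := by
    rw [hν, measure_T_zero μ hμ, ENNReal.toReal_mul,
      ENNReal.toReal_sub_of_le hBle hC0top, htC0, htB1]
    ring
  have hνTn : ∀ m : ℕ, (ν (T p (m+1))).toReal = (1 - aR) * (aR ^ (m+1) * (1 - aR)) := by
    intro m
    rw [hν, measure_T_pos μ hμ (Nat.succ_le_succ (Nat.zero_le m)), ENNReal.toReal_mul,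
      htC0, htCn]
  -- the individual integrals
  have hI0 : ∫ z in T p 0, f z ∂ν = (((1 - aR) * (1 - 2*aR) : ℝ) : ℂ) := by
    rw [hIn 0, hνT0]
    norm_num
  have hterm : ∀ n : ℕ, ∫ z in T p (n+1), f z ∂ν
      = ((1 - ((p:ℝ)⁻¹ : ℂ)) ^ 2) * w ^ (n+1) := by
    intro n
    rw [hIn (n+1), hνTn n, Complex.real_smul, hwdef, ← aux_pow s (n+1), haR]
    push_cast
    ring
  -- sum it up
  have hsummable := hsum.summable
  have htail : ∑' n : ℕ, ∫ z in T p (n+1), f z ∂ν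
      = ((1 - ((p:ℝ)⁻¹ : ℂ)) ^ 2) * (w * (1 - w)⁻¹) := by
    calc ∑' n : ℕ, ∫ z in T p (n+1), f z ∂ν
        = ∑' n : ℕ, ((1 - ((p:ℝ)⁻¹ : ℂ)) ^ 2) * w ^ (n+1) := tsum_congr hterm
      _ = ((1 - ((p:ℝ)⁻¹ : ℂ)) ^ 2) * ∑' n : ℕ, w ^ (n+1) := tsum_mul_left
      _ = ((1 - ((p:ℝ)⁻¹ : ℂ)) ^ 2) * (w * (1 - w)⁻¹) := by
        congr 1
        simp_rw [pow_succ']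
        rw [tsum_mul_left, tsum_geometric_of_norm_lt_one hw]
  have hLHS : ∫ z in ({x : ℚ_[p] | ‖x‖ = 1} ×ˢ {x : ℚ_[p] | ‖x‖ = 1}), f z ∂ν
      = (((1 - aR) * (1 - 2*aR) : ℝ) : ℂ)
        + ((1 - ((p:ℝ)⁻¹ : ℂ)) ^ 2) * (w * (1 - w)⁻¹) := by
    rw [hUC, hstep, ← hsum.tsum_eq, hsummable.tsum_eq_zero_add, hI0, htail]
  rw [hLHS]
  -- final algebra
  have hpow2 : (p:ℂ) ^ (-2 : ℂ) = ((p:ℂ) ^ (2:ℕ))⁻¹ := by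
    rw [show (-2 : ℂ) = ((-2 : ℤ) : ℂ) by norm_num, Complex.cpow_intCast]
    rw [show (-2 : ℤ) = -(2:ℕ) by norm_num, zpow_neg, zpow_natCast]
  have hsplit : (p:ℂ) ^ (-2 - s) = (p:ℂ)⁻¹ * w := by
    rw [hwdef, show (-2 - s : ℂ) = (-1) + (-1 - s) by ring, Complex.cpow_add _ _ hpc,
      Complex.cpow_neg_one]
  rw [hpow2, hsplit, haR]
  push_cast
  field_simp
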